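/- arXiv:1309.5650 — 2 statements merged into one kernel-verified Lean document; each statement's English description precedes it below -/
import Mathlib

section
/- Let a < b be coprime positive integers and let ij and km be a,b-admissible diagonals of P_{b+1} with i < j ≤ k < m. Then {ij, km} is a face of Ass(a,b), i.e., there exists an a,b-Dyck path D with {ij, km} ⊆ F(D). -/
/-- `S(a,b) = { ⌊ib/a⌋ : i = 1, …, a-1 }`. -/
def Sab (a b : ℕ) : Finset ℕ := (Finset.Icc 1 (a - 1)).image (fun i => i * b / a)

/-- A diagonal of the polygon `P_{b+1}` with boundary points `0, 1, …, b`: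
a pair `i < j` with `j - i ≥ 2` and `(i, j) ≠ (0, b)`. -/
def IsDiagonal (b i j : ℕ) : Prop := i + 2 ≤ j ∧ j ≤ b ∧ ¬(i = 0 ∧ j = b)

/-- A diagonal `ij` is `a,b`-admissible if it separates `j - i - 1` and `b - j + i`
boundary points, both of which lie in `S(a,b)`. -/
def Admissible (a b : ℕ) (d : ℕ × ℕ) : Prop :=
  IsDiagonal b d.1 d.2 ∧ d.2 - d.1 - 1 ∈ Sab a b ∧ b - d.2 + d.1 ∈ Sab a b

/-- Two diagonals `ij` and `km` cross if `i < k < j < m` or `k < i < m < j`. -/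
def Crosses (d d' : ℕ × ℕ) : Prop :=
  (d.1 < d'.1 ∧ d'.1 < d.2 ∧ d.2 < d'.2) ∨ (d'.1 < d.1 ∧ d.1 < d'.2 ∧ d'.2 < d.2)

/-- An `a,b`-Dyck path: a north/east lattice path from `(0,0)` to `(b,a)` staying weakly
above `y = (a/b) x`.  It is encoded by the height `h u` of its unique east step over the
column interval `[u, u+1]`, for `0 ≤ u < b`; we normalize `h u = a` for `u ≥ b`. -/
structure DyckPath (a b : ℕ) where
  h : ℕ → ℕ
  mono : Monotone h
  norm : ∀ x, b ≤ x → h x = a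
  above : ∀ x, x < b → a * (x + 1) ≤ b * h x

/-- The lattice point `(x, y)` lies on `D` at the bottom of a north step of `D`. -/
def BottomNorth (a b : ℕ) (D : DyckPath a b) (x y : ℕ) : Prop :=
  x ≤ b ∧ (if x = 0 then 0 else D.h (x - 1)) ≤ y ∧ y < D.h x

/-- The laser of slope `a/b` fired northeast from the lattice point `(x, y)` of `D` first
hits `D` in the interior of the east step whose right endpoint has `x`-coordinate `k`;
the associated laser diagonal is `d(P) = (x, k)`.  The laser passes strictly below the
right endpoint of every earlier east step and strictly above the one it hits. -/
def IsLaserDiag (a b : ℕ) (D : DyckPath a b) (x y k : ℕ) : Prop :=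
  x < k ∧ k ≤ b ∧ b * D.h (k - 1) < b * y + a * (k - x) ∧
    ∀ u, x ≤ u → u + 1 < k → b * y + a * (u + 1 - x) < b * D.h u

/-- `F(D)`: the set of laser diagonals `d(P)` of the lattice points `P ≠ (0,0)` at the
bottoms of north steps of `D`. -/
def FD (a b : ℕ) (D : DyckPath a b) : Set (ℕ × ℕ) :=
  { d | ∃ y, BottomNorth a b D d.1 y ∧ (d.1, y) ≠ (0, 0) ∧ IsLaserDiag a b D d.1 y d.2 }

/-- A finite abstract simplicial complex on the ground set `E`: a downward closed
collection of finite subsets of `E`. -/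
structure AbsCplx (E : Type*) where
  faces : Set (Finset E)
  down : ∀ F ∈ faces, ∀ F' ⊆ F, F' ∈ faces

/-- The rational associahedron `Âss(a,b)`: faces are the sets of pairwise noncrossing
`a,b`-admissible diagonals. -/
def hatAss (a b : ℕ) : AbsCplx (ℕ × ℕ) where
  faces := { F | (∀ d ∈ F, Admissible a b d) ∧ ∀ d ∈ F, ∀ d' ∈ F, ¬Crosses d d' }
  down := fun F hF F' hsub =>
    ⟨fun d hd => hF.1 d (hsub hd), fun d hd d' hd' => hF.2 d (hsub hd) d' (hsub hd')⟩

/-- The rational associahedron `Ass(a,b)`: faces are the subsets of the sets `F(D)`,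
as `D` ranges over `a,b`-Dyck paths. -/
def Ass (a b : ℕ) : AbsCplx (ℕ × ℕ) where
  faces := { F | ∃ D : DyckPath a b, ∀ d ∈ F, d ∈ FD a b D }
  down := fun F hF F' hsub =>
    let ⟨D, hD⟩ := hF
    ⟨D, fun d hd => hD d (hsub hd)⟩

lemma ceilb_ge (a b t : ℕ) (hb : 0 < b) :
    a * t ≤ b * ((a * t + (b - 1)) / b) := by
  obtain ⟨c, rfl⟩ : ∃ c, b = c + 1 := ⟨b - 1, by omega⟩
  simp only [Nat.add_sub_cancel]
  have h1 := Nat.div_add_mod (a * t + c) (c + 1)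
  have h2 : (a * t + c) % (c + 1) < c + 1 := Nat.mod_lt _ hb
  linarith

lemma ceilb_gt (a b t : ℕ) (hb : 0 < b) (hcop : Nat.Coprime a b)
    (ht : 1 ≤ t) (htb : t < b) :
    a * t < b * ((a * t + (b - 1)) / b) := by
  rcases (ceilb_ge a b t hb).lt_or_eq with h | h
  · exact h
  · exfalso
    have hdvd : b ∣ a * t := ⟨_, h⟩
    have : b ∣ t := (hcop.symm).dvd_of_dvd_mul_left hdvd
    have := Nat.le_of_dvd (by omega) this
    omega

lemma ceilb_le (a b t s : ℕ) (hb : 0 < b) (h : a * t ≤ s * b) :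
    (a * t + (b - 1)) / b ≤ s := by
  obtain ⟨c, rfl⟩ : ∃ c, b = c + 1 := ⟨b - 1, by omega⟩
  simp only [Nat.add_sub_cancel]
  have : (a * t + c) / (c + 1) < s + 1 := by
    rw [Nat.div_lt_iff_lt_mul hb]
    nlinarith
  omega

lemma ceilb_ge_succ (a b t s : ℕ) (hb : 0 < b) (h : s * b < a * t) :
    s + 1 ≤ (a * t + (b - 1)) / b := by
  obtain ⟨c, rfl⟩ : ∃ c, b = c + 1 := ⟨b - 1, by omega⟩
  simp only [Nat.add_sub_cancel]
  rw [Nat.le_div_iff_mul_le hb]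
  nlinarith

lemma key (a b p : ℕ) (ha : 0 < a) (hab : a < b)
    (hp1 : 1 ≤ p) (hpa : p < a) :
    a * (b - 1 - p * b / a) + p * b ≤ a * b := by
  have hd := Nat.div_add_mod (p * b) a
  have hm2 : p * b % a < a := Nat.mod_lt _ ha
  have hb : 0 < b := by omega
  have hP : p * b / a < b := by
    rw [Nat.div_lt_iff_lt_mul ha]
    nlinarith
  zify [show p * b / a ≤ b - 1 by omega, show (1:ℕ) ≤ b by omega]
  zify at hd
  linarith

/-- The height function of the Dyck path realizing the two nested lasers. -/
def pathH (a b i k y p r : ℕ) : ℕ → ℕ := fun x =>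
  if x < k then y + min p ((a * (x + 1 - i) + (b - 1)) / b)
  else y + p + min r ((a * (x + 1 - k) + (b - 1)) / b)

set_option maxHeartbeats 1600000 in
/-- Two `a,b`-admissible diagonals `ij` and `km` with `i < j ≤ k < m` form a face of
`Ass(a,b)`. -/
theorem nested_pair_mem_Ass (a b i j k m : ℕ) (ha : 0 < a) (hab : a < b)
    (hcop : Nat.Coprime a b) (hij : i < j) (hjk : j ≤ k) (hkm : k < m)
    (h1 : Admissible a b (i, j)) (h2 : Admissible a b (k, m)) :
    ({(i, j), (k, m)} : Finset (ℕ × ℕ)) ∈ (Ass a b).faces := by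
  have hb : 0 < b := by omega
  obtain ⟨hd1, hs1, -⟩ := h1
  obtain ⟨hd2, hs2, -⟩ := h2
  have hij2 : i + 2 ≤ j := hd1.1
  have hjb : j ≤ b := hd1.2.1
  have hkm2 : k + 2 ≤ m := hd2.1
  have hmb : m ≤ b := hd2.2.1
  have hs1' : j - i - 1 ∈ Sab a b := hs1
  have hs2' : m - k - 1 ∈ Sab a b := hs2
  simp only [Sab, Finset.mem_image, Finset.mem_Icc] at hs1' hs2'
  obtain ⟨p, ⟨hp1, hpa⟩, hpj⟩ := hs1'
  obtain ⟨r, ⟨hr1, hra⟩, hrm⟩ := hs2'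
  have hpa' : p < a := by omega
  have hra' : r < a := by omega
  -- div/mod facts
  have hmodp : p * b % a < a := Nat.mod_lt _ ha
  have hmodr : r * b % a < a := Nat.mod_lt _ ha
  have hdp := Nat.div_add_mod (p * b) a
  have hdr := Nat.div_add_mod (r * b) a
  rw [hpj] at hdp
  rw [hrm] at hdr
  -- hdp : a * (j - i - 1) + p * b % a = p * b
  have hPb : j - i - 1 < b := by
    have h' : p * b / a < b := by
      rw [Nat.div_lt_iff_lt_mul ha]; nlinarith
    omega
  have hRb : m - k - 1 < b := by
    have h' : r * b / a < b := by
      rw [Nat.div_lt_iff_lt_mul ha]; nlinarith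
    omega
  -- key inequalities
  have hk1 := key a b p ha hab hp1 hpa'
  rw [hpj] at hk1
  have e1 : b - 1 - (j - i - 1) = b - j + i := by omega
  rw [e1] at hk1
  have A4 : a * i + p * b ≤ a * j := by
    zify [hjb] at hk1
    zify
    linarith
  have hk2 := key a b r ha hab hr1 hra'
  rw [hrm] at hk2
  have e2 : b - 1 - (m - k - 1) = b - m + k := by omega
  rw [e2] at hk2
  have A3 : a * k + r * b ≤ a * m := by
    zify [hmb] at hk2
    zify
    linarith
  have hajk : a * j ≤ a * k := Nat.mul_le_mul_left a hjk
  have hamb : a * m ≤ a * b := Nat.mul_le_mul_left a hmb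
  have hji : a * (j - i) = a * (j - i - 1) + a := by
    rw [← Nat.mul_succ]; congr 1; omega
  have hmk : a * (m - k) = a * (m - k - 1) + a := by
    rw [← Nat.mul_succ]; congr 1; omega
  have haji : a * (j - i) ≤ a * j := Nat.mul_le_mul_left a (by omega)
  have A1 : b * p < a * (j - i) := by
    rw [hji]; linarith
  have A2 : b * r < a * (m - k) := by
    rw [hmk]; linarith
  have A5 : p + r < a := by
    have h' : (p + r) * b < a * b := by linarith
    exact lt_of_mul_lt_mul_right h' (Nat.zero_le b)
  obtain ⟨y, hy1, hy2⟩ : ∃ y, 1 ≤ y ∧ y + p + r = a := ⟨a - p - r, by omega, by omega⟩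
  have hba : a * b = y * b + p * b + r * b := by rw [← hy2]; ring
  have hiy : a * i ≤ b * y := by linarith
  have hky : a * k ≤ b * y + b * p := by linarith
  -- evaluation lemmas for the path
  have hH1 : ∀ x, x < i → pathH a b i k y p r x = y := by
    intro x hx
    have h0 : x + 1 - i = 0 := by omega
    simp only [pathH]
    rw [if_pos (by omega : x < k), h0, Nat.mul_zero, Nat.zero_add,
      Nat.div_eq_of_lt (by omega : b - 1 < b)]
    simp
  have hH2 : ∀ x, i ≤ x → x + 1 < j →
      pathH a b i k y p r x = y + (a * (x + 1 - i) + (b - 1)) / b := by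
    intro x hx1 hx2
    have hle : (a * (x + 1 - i) + (b - 1)) / b ≤ p := by
      apply ceilb_le a b _ p hb
      have : a * (x + 1 - i) ≤ a * (j - i - 1) := Nat.mul_le_mul_left a (by omega)
      linarith [Nat.zero_le (p * b % a)]
    simp only [pathH]
    rw [if_pos (by omega : x < k), min_eq_right hle]
  have hH3 : ∀ x, j ≤ x + 1 → x < k → pathH a b i k y p r x = y + p := by
    intro x hx1 hx2
    have hgt : p + 1 ≤ (a * (x + 1 - i) + (b - 1)) / b := by
      apply ceilb_ge_succ a b _ p hb
      have : a * (j - i) ≤ a * (x + 1 - i) := Nat.mul_le_mul_left a (by omega)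
      linarith
    simp only [pathH]
    rw [if_pos hx2, min_eq_left (by omega)]
  have hH4 : ∀ x, k ≤ x → x + 1 < m →
      pathH a b i k y p r x = y + p + (a * (x + 1 - k) + (b - 1)) / b := by
    intro x hx1 hx2
    have hle : (a * (x + 1 - k) + (b - 1)) / b ≤ r := by
      apply ceilb_le a b _ r hb
      have : a * (x + 1 - k) ≤ a * (m - k - 1) := Nat.mul_le_mul_left a (by omega)
      linarith [Nat.zero_le (r * b % a)]
    simp only [pathH]
    rw [if_neg (by omega : ¬ x < k), min_eq_right hle]
  have hH5 : ∀ x, m ≤ x + 1 → pathH a b i k y p r x = a := by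
    intro x hx
    have hgt : r + 1 ≤ (a * (x + 1 - k) + (b - 1)) / b := by
      apply ceilb_ge_succ a b _ r hb
      have : a * (m - k) ≤ a * (x + 1 - k) := Nat.mul_le_mul_left a (by omega)
      linarith
    simp only [pathH]
    rw [if_neg (by omega : ¬ x < k), min_eq_left (by omega)]
    omega
  -- DyckPath fields
  have hmono : Monotone (pathH a b i k y p r) := by
    apply monotone_nat_of_le_succ
    intro x
    simp only [pathH]
    by_cases c1 : x + 1 < k
    · rw [if_pos (by omega : x < k), if_pos c1]
      have hc : (a * (x + 1 - i) + (b - 1)) / b ≤ (a * (x + 1 + 1 - i) + (b - 1)) / b := by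
        apply Nat.div_le_div_right
        have : a * (x + 1 - i) ≤ a * (x + 1 + 1 - i) := Nat.mul_le_mul_left a (by omega)
        omega
      have := min_le_min (le_refl p) hc
      linarith
    · by_cases c2 : x < k
      · rw [if_pos c2, if_neg (by omega : ¬ x + 1 < k)]
        have := min_le_left p ((a * (x + 1 - i) + (b - 1)) / b)
        linarith [Nat.zero_le (min r ((a * (x + 1 + 1 - k) + (b - 1)) / b))]
      · rw [if_neg c2, if_neg (by omega : ¬ x + 1 < k)]
        have hc : (a * (x + 1 - k) + (b - 1)) / b ≤ (a * (x + 1 + 1 - k) + (b - 1)) / b := by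
          apply Nat.div_le_div_right
          have : a * (x + 1 - k) ≤ a * (x + 1 + 1 - k) := Nat.mul_le_mul_left a (by omega)
          omega
        have := min_le_min (le_refl r) hc
        linarith
  have hnorm : ∀ x, b ≤ x → pathH a b i k y p r x = a := fun x hx => hH5 x (by omega)
  have habove : ∀ x, x < b → a * (x + 1) ≤ b * pathH a b i k y p r x := by
    intro x hx
    by_cases c1 : x < i
    · rw [hH1 x c1]
      have : a * (x + 1) ≤ a * i := Nat.mul_le_mul_left a (by omega)
      linarith
    by_cases c2 : x + 1 < j
    · rw [hH2 x (by omega) c2]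
      have hsplit : a * (x + 1) = a * i + a * (x + 1 - i) := by
        rw [← Nat.mul_add]; congr 1; omega
      have hc := ceilb_ge a b (x + 1 - i) hb
      have : b * (y + (a * (x + 1 - i) + (b - 1)) / b)
          = b * y + b * ((a * (x + 1 - i) + (b - 1)) / b) := by ring
      linarith
    by_cases c3 : x < k
    · rw [hH3 x (by omega) c3]
      have : a * (x + 1) ≤ a * k := Nat.mul_le_mul_left a (by omega)
      linarith [show b * (y + p) = b * y + b * p from by ring]
    by_cases c4 : x + 1 < m
    · rw [hH4 x (by omega) c4]
      have hsplit : a * (x + 1) = a * k + a * (x + 1 - k) := by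
        rw [← Nat.mul_add]; congr 1; omega
      have hc := ceilb_ge a b (x + 1 - k) hb
      have : b * (y + p + (a * (x + 1 - k) + (b - 1)) / b)
          = b * y + b * p + b * ((a * (x + 1 - k) + (b - 1)) / b) := by ring
      linarith
    · rw [hH5 x (by omega)]
      have : a * (x + 1) ≤ a * b := Nat.mul_le_mul_left a (by omega)
      linarith
  refine ⟨⟨pathH a b i k y p r, hmono, hnorm, habove⟩, ?_⟩
  intro d hd
  rw [Finset.mem_insert, Finset.mem_singleton] at hd
  rcases hd with rfl | rfl
  · show ∃ z, BottomNorth a b _ i z ∧ ((i : ℕ), z) ≠ (0, 0) ∧ IsLaserDiag a b _ i z j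
    refine ⟨y, ⟨by omega, ?_, ?_⟩, ?_, hij, hjb, ?_, ?_⟩
    · by_cases hi0 : i = 0
      · simp [hi0]
      · rw [if_neg hi0]
        show pathH a b i k y p r (i - 1) ≤ y
        rw [hH1 (i - 1) (by omega)]
    · show y < pathH a b i k y p r i
      rw [hH2 i le_rfl (by omega)]
      have e : i + 1 - i = 1 := by omega
      rw [e]
      have := ceilb_ge_succ a b 1 0 hb (by simpa using ha)
      linarith
    · simp only [ne_eq, Prod.mk.injEq, not_and]
      intro _; omega
    · show b * pathH a b i k y p r (j - 1) < b * y + a * (j - i)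
      rw [hH3 (j - 1) (by omega) (by omega)]
      linarith [show b * (y + p) = b * y + b * p from by ring]
    · intro u hu1 hu2
      show b * y + a * (u + 1 - i) < b * pathH a b i k y p r u
      rw [hH2 u hu1 hu2]
      have := ceilb_gt a b (u + 1 - i) hb hcop (by omega) (by omega)
      have he : b * (y + (a * (u + 1 - i) + (b - 1)) / b)
          = b * y + b * ((a * (u + 1 - i) + (b - 1)) / b) := by ring
      linarith
  · show ∃ z, BottomNorth a b _ k z ∧ ((k : ℕ), z) ≠ (0, 0) ∧ IsLaserDiag a b _ k z m
    refine ⟨y + p, ⟨by omega, ?_, ?_⟩, ?_, hkm, hmb, ?_, ?_⟩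
    · rw [if_neg (by omega : ¬ k = 0)]
      show pathH a b i k y p r (k - 1) ≤ y + p
      rw [hH3 (k - 1) (by omega) (by omega)]
    · show y + p < pathH a b i k y p r k
      rw [hH4 k le_rfl (by omega)]
      have e : k + 1 - k = 1 := by omega
      rw [e]
      have := ceilb_ge_succ a b 1 0 hb (by simpa using ha)
      linarith
    · simp only [ne_eq, Prod.mk.injEq, not_and]
      intro h'; omega
    · show b * pathH a b i k y p r (m - 1) < b * (y + p) + a * (m - k)
      rw [hH5 (m - 1) (by omega)]
      linarith [show b * (y + p) = b * y + b * p from by ring,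
        show b * a = a * b from by ring]
    · intro u hu1 hu2
      show b * (y + p) + a * (u + 1 - k) < b * pathH a b i k y p r u
      rw [hH4 u hu1 hu2]
      have := ceilb_gt a b (u + 1 - k) hb hcop (by omega) (by omega)
      have he : b * (y + p + (a * (u + 1 - k) + (b - 1)) / b)
          = b * y + b * p + b * ((a * (u + 1 - k) + (b - 1)) / b) := by ring
      linarith [show b * (y + p) = b * y + b * p from by ring]
end

section
/- Let a < b be coprime positive integers and let im and km be a,b-admissible diagonals of P_{b+1} with i < k < m such that {im, km} is an edge of the obstruction graph OG(a,b). Then ik is an a,b-admissible diagonal of P_{b+1}. -/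
/-- Two distinct `a,b`-admissible diagonals `d, d'` form an edge of the obstruction graph
`OG(a,b)` exactly when `{d, d'}` is a face of `Âss(a,b)` but not of `Ass(a,b)`. -/
def OGEdge (a b : ℕ) (d d' : ℕ × ℕ) : Prop :=
  d ≠ d' ∧ ({d, d'} : Finset (ℕ × ℕ)) ∈ (hatAss a b).faces ∧
    ({d, d'} : Finset (ℕ × ℕ)) ∉ (Ass a b).faces

/-! ### Auxiliary arithmetic lemmas -/

lemma ceil_div_le {b x c : ℕ} (hb : 0 < b) (h : x ≤ b * c) : (x + b - 1) / b ≤ c := by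
  rw [Nat.div_le_iff_le_mul_add_pred hb]
  omega

lemma le_mul_ceil {b : ℕ} (hb : 0 < b) (x : ℕ) : x ≤ b * ((x + b - 1) / b) := by
  have key := Nat.div_add_mod (x + b - 1) b
  have hr : (x + b - 1) % b < b := Nat.mod_lt _ hb
  omega

lemma lt_mul_div_add {b : ℕ} (hb : 0 < b) (x : ℕ) : x < b * (x / b) + b := by
  have key := Nat.div_add_mod x b
  have hr : x % b < b := Nat.mod_lt _ hb
  omega

lemma div_lt' {b x c : ℕ} (hb : 0 < b) (h : x < c * b) : x / b < c :=
  (Nat.div_lt_iff_lt_mul hb).2 h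

lemma sab_bounds {a b c t : ℕ} (ha : 0 < a) (hcop : Nat.Coprime a b)
    (hc1 : 1 ≤ c) (hc2 : c ≤ a - 1) (heq : c * b / a = t) :
    a * t < c * b ∧ c * b < a * t + a := by
  have key := Nat.div_add_mod (c * b) a
  have hr : (c * b) % a < a := Nat.mod_lt _ ha
  have hne : (c * b) % a ≠ 0 := by
    intro h0
    have hdvd : a ∣ c * b := Nat.dvd_of_mod_eq_zero h0
    have h2 : a ∣ c := hcop.dvd_of_dvd_mul_right hdvd
    have := Nat.le_of_dvd (by omega) h2
    omega
  rw [heq] at key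
  omega

/-! ### Construction of the Dyck path realizing both diagonals -/

lemma exists_dyck (a b i k m ci ck : ℕ) (ha : 0 < a) (hab : a < b)
    (hik : i < k) (hkm : k + 2 ≤ m) (hmb : m ≤ b)
    (hci2 : ci < a) (hck1 : 1 ≤ ck) (hcki : ck < ci)
    (h1l : a * (m - i - 1) < ci * b) (h1r : ci * b < a * (m - i))
    (h2l : a * (m - k - 1) < ck * b) (h2r : ck * b < a * (m - k))
    (hbig : a * (k - i) < (ci - ck) * b) :
    ∃ D : DyckPath a b, (i, m) ∈ FD a b D ∧ (k, m) ∈ FD a b D := by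
  have hb : 0 < b := by omega
  set f : ℕ → ℕ := fun u =>
    if m - 1 ≤ u then a
    else max ((a * (u + 1) + b - 1) / b)
      (max (if i ≤ u then (a - ci) + a * (u + 1 - i) / b + 1 else 0)
           (if k ≤ u then (a - ck) + a * (u + 1 - k) / b + 1 else 0)) with hf
  have hbase_le : ∀ u, u < b → (a * (u + 1) + b - 1) / b ≤ a := by
    intro u hu
    apply ceil_div_le hb
    calc a * (u + 1) ≤ a * b := Nat.mul_le_mul le_rfl (by omega)
      _ = b * a := Nat.mul_comm a b
  have hLi_le : ∀ u, u + 1 < m → (a - ci) + a * (u + 1 - i) / b + 1 ≤ a := by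
    intro u hu
    have h1 : a * (u + 1 - i) ≤ a * (m - i - 1) := Nat.mul_le_mul le_rfl (by omega)
    have h2 : a * (u + 1 - i) / b < ci := div_lt' hb (lt_of_le_of_lt h1 h1l)
    omega
  have hLk_le : ∀ u, u + 1 < m → (a - ck) + a * (u + 1 - k) / b + 1 ≤ a := by
    intro u hu
    have h1 : a * (u + 1 - k) ≤ a * (m - k - 1) := Nat.mul_le_mul le_rfl (by omega)
    have h2 : a * (u + 1 - k) / b < ck := div_lt' hb (lt_of_le_of_lt h1 h2l)
    omega
  have f_le_a : ∀ u, ¬ (m - 1 ≤ u) → f u ≤ a := by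
    intro u hum
    have hu1 : u + 1 < m := by omega
    simp only [hf]
    rw [if_neg hum]
    apply max_le (hbase_le u (by omega))
    apply max_le
    · by_cases hi : i ≤ u
      · rw [if_pos hi]; exact hLi_le u hu1
      · rw [if_neg hi]; exact Nat.zero_le a
    · by_cases hk : k ≤ u
      · rw [if_pos hk]; exact hLk_le u hu1
      · rw [if_neg hk]; exact Nat.zero_le a
  have fmono : Monotone f := by
    intro u v huv
    by_cases hu : m - 1 ≤ u
    · have hv : m - 1 ≤ v := le_trans hu huv
      simp only [hf]; rw [if_pos hu, if_pos hv]
    · by_cases hv : m - 1 ≤ v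
      · have h1 : f u ≤ a := f_le_a u hu
        have h2 : f v = a := by simp only [hf]; rw [if_pos hv]
        omega
      · simp only [hf]; rw [if_neg hu, if_neg hv]
        apply max_le_max
        · exact Nat.div_le_div_right (Nat.sub_le_sub_right
            (Nat.add_le_add_right (Nat.mul_le_mul le_rfl (by omega)) b) 1)
        · apply max_le_max
          · by_cases hi : i ≤ u
            · rw [if_pos hi, if_pos (le_trans hi huv)]
              have : a * (u + 1 - i) / b ≤ a * (v + 1 - i) / b :=
                Nat.div_le_div_right (Nat.mul_le_mul le_rfl (by omega))
              omega
            · rw [if_neg hi]; exact Nat.zero_le _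
          · by_cases hk : k ≤ u
            · rw [if_pos hk, if_pos (le_trans hk huv)]
              have : a * (u + 1 - k) / b ≤ a * (v + 1 - k) / b :=
                Nat.div_le_div_right (Nat.mul_le_mul le_rfl (by omega))
              omega
            · rw [if_neg hk]; exact Nat.zero_le _
  have fnorm : ∀ x, b ≤ x → f x = a := by
    intro x hx; simp only [hf]; rw [if_pos (by omega)]
  have fabove : ∀ x, x < b → a * (x + 1) ≤ b * f x := by
    intro x hx
    by_cases hxm : m - 1 ≤ x
    · have : f x = a := by simp only [hf]; rw [if_pos hxm]
      rw [this]
      calc a * (x + 1) ≤ a * b := Nat.mul_le_mul le_rfl (by omega)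
        _ = b * a := Nat.mul_comm a b
    · have hev : f x = max ((a * (x + 1) + b - 1) / b)
          (max (if i ≤ x then (a - ci) + a * (x + 1 - i) / b + 1 else 0)
               (if k ≤ x then (a - ck) + a * (x + 1 - k) / b + 1 else 0)) := by
        simp only [hf]; rw [if_neg hxm]
      rw [hev]
      calc a * (x + 1) ≤ b * ((a * (x + 1) + b - 1) / b) := le_mul_ceil hb _
        _ ≤ b * _ := Nat.mul_le_mul le_rfl (le_max_left _ _)
  have fm1 : f (m - 1) = a := by simp only [hf]; rw [if_pos le_rfl]
  have hLi_ge : ∀ u, i ≤ u → u + 1 < m → (a - ci) + a * (u + 1 - i) / b + 1 ≤ f u := by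
    intro u hiu hum
    have hev : f u = max ((a * (u + 1) + b - 1) / b)
        (max ((a - ci) + a * (u + 1 - i) / b + 1)
             (if k ≤ u then (a - ck) + a * (u + 1 - k) / b + 1 else 0)) := by
      simp only [hf]; rw [if_neg (by omega), if_pos hiu]
    rw [hev]
    exact le_max_of_le_right (le_max_left _ _)
  have hLk_ge : ∀ u, k ≤ u → u + 1 < m → (a - ck) + a * (u + 1 - k) / b + 1 ≤ f u := by
    intro u hku hum
    have hev : f u = max ((a * (u + 1) + b - 1) / b)
        (max ((a - ci) + a * (u + 1 - i) / b + 1)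
             ((a - ck) + a * (u + 1 - k) / b + 1)) := by
      simp only [hf]; rw [if_neg (by omega), if_pos (by omega), if_pos hku]
    rw [hev]
    exact le_max_of_le_right (le_max_right _ _)
  have laser : ∀ p yp, (∀ u, p ≤ u → u + 1 < m → yp + a * (u + 1 - p) / b + 1 ≤ f u) →
      ∀ u, p ≤ u → u + 1 < m → b * yp + a * (u + 1 - p) < b * f u := by
    intro p yp hg u hpu hum
    calc b * yp + a * (u + 1 - p)
        < b * yp + (b * (a * (u + 1 - p) / b) + b) := by
          have := lt_mul_div_add hb (a * (u + 1 - p)); omega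
      _ = b * (yp + a * (u + 1 - p) / b + 1) := by ring
      _ ≤ b * f u := Nat.mul_le_mul le_rfl (hg u hpu hum)
  refine ⟨⟨f, fmono, fnorm, fabove⟩, ?_, ?_⟩
  · simp only [FD, Set.mem_setOf_eq, BottomNorth, IsLaserDiag]
    refine ⟨a - ci, ⟨by omega, ?_, ?_⟩, ?_, by omega, hmb, ?_, ?_⟩
    · show (if i = 0 then 0 else f (i - 1)) ≤ a - ci
      by_cases hi0 : i = 0
      · rw [if_pos hi0]; exact Nat.zero_le _
      · rw [if_neg hi0]
        have hev : f (i - 1) = max ((a * (i - 1 + 1) + b - 1) / b) (max 0 0) := by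
          simp only [hf]; rw [if_neg (by omega), if_neg (by omega), if_neg (by omega)]
        rw [hev, show i - 1 + 1 = i from by omega]
        apply max_le ?_ (by simp)
        apply ceil_div_le hb
        have e1 : b * (a - ci) + b * ci = b * a := by rw [← Nat.mul_add]; congr 1; omega
        have e2 : a * (m - i) + a * i ≤ a * b := by
          rw [← Nat.mul_add]; exact Nat.mul_le_mul le_rfl (by omega)
        have e3 : ci * b = b * ci := Nat.mul_comm _ _
        have e4 : a * b = b * a := Nat.mul_comm _ _
        omega
    · show a - ci < f i
      have h := hLi_ge i le_rfl (by omega)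
      rw [show i + 1 - i = 1 from by omega, Nat.mul_one, Nat.div_eq_of_lt hab] at h
      omega
    · intro hcon; rw [Prod.mk.injEq] at hcon; omega
    · show b * f (m - 1) < b * (a - ci) + a * (m - i)
      rw [fm1]
      have e1 : b * (a - ci) + b * ci = b * a := by rw [← Nat.mul_add]; congr 1; omega
      have e3 : ci * b = b * ci := Nat.mul_comm _ _
      omega
    · exact laser i (a - ci) hLi_ge
  · simp only [FD, Set.mem_setOf_eq, BottomNorth, IsLaserDiag]
    refine ⟨a - ck, ⟨by omega, ?_, ?_⟩, ?_, by omega, hmb, ?_, ?_⟩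
    · show (if k = 0 then 0 else f (k - 1)) ≤ a - ck
      rw [if_neg (by omega : ¬ k = 0)]
      have hev : f (k - 1) = max ((a * (k - 1 + 1) + b - 1) / b)
          (max ((a - ci) + a * (k - 1 + 1 - i) / b + 1) 0) := by
        simp only [hf]; rw [if_neg (by omega), if_pos (by omega), if_neg (by omega)]
      rw [hev, show k - 1 + 1 = k from by omega]
      apply max_le
      · apply ceil_div_le hb
        have e1 : b * (a - ck) + b * ck = b * a := by rw [← Nat.mul_add]; congr 1; omega
        have e2 : a * (m - k) + a * k ≤ a * b := by
          rw [← Nat.mul_add]; exact Nat.mul_le_mul le_rfl (by omega)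
        have e3 : ck * b = b * ck := Nat.mul_comm _ _
        have e4 : a * b = b * a := Nat.mul_comm _ _
        omega
      · apply max_le ?_ (Nat.zero_le _)
        have hq : a * (k - i) / b < ci - ck := div_lt' hb hbig
        omega
    · show a - ck < f k
      have h := hLk_ge k le_rfl (by omega)
      rw [show k + 1 - k = 1 from by omega, Nat.mul_one, Nat.div_eq_of_lt hab] at h
      omega
    · intro hcon; rw [Prod.mk.injEq] at hcon; omega
    · show b * f (m - 1) < b * (a - ck) + a * (m - k)
      rw [fm1]
      have e1 : b * (a - ck) + b * ck = b * a := by rw [← Nat.mul_add]; congr 1; omega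
      have e3 : ck * b = b * ck := Nat.mul_comm _ _
      omega
    · exact laser k (a - ck) hLk_ge

/-- If the `a,b`-admissible diagonals `im` and `km` with `i < k < m` form an edge of
`OG(a,b)`, then `ik` is an `a,b`-admissible diagonal. -/
theorem OGEdge_completing_wedge (a b i k m : ℕ) (ha : 0 < a) (hab : a < b)
    (hcop : Nat.Coprime a b) (hik : i < k) (hkm : k < m)
    (h1 : Admissible a b (i, m)) (h2 : Admissible a b (k, m))
    (he : OGEdge a b (i, m) (k, m)) : Admissible a b (i, k) := by
  have hmb : m ≤ b := h1.1.2.1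
  have hkm2 : k + 2 ≤ m := h2.1.1
  have hs1 := h1.2.1
  have hs2 := h2.2.1
  simp only [Sab, Finset.mem_image, Finset.mem_Icc] at hs1 hs2
  obtain ⟨ci, ⟨hci1, hci2⟩, hcieq⟩ := hs1
  obtain ⟨ck, ⟨hck1, hck2⟩, hckeq⟩ := hs2
  have hcib := sab_bounds ha hcop hci1 hci2 hcieq
  have hckb := sab_bounds ha hcop hck1 hck2 hckeq
  have h1l : a * (m - i - 1) < ci * b := hcib.1
  have h1r : ci * b < a * (m - i) := by
    have h := hcib.2
    have e : a * (m - i) = a * (m - i - 1) + a := by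
      rw [← Nat.mul_succ]; congr 1; omega
    omega
  have h2l : a * (m - k - 1) < ck * b := hckb.1
  have h2r : ck * b < a * (m - k) := by
    have h := hckb.2
    have e : a * (m - k) = a * (m - k - 1) + a := by
      rw [← Nat.mul_succ]; congr 1; omega
    omega
  have hcia : ci < a := by omega
  have hcki : ck < ci := by
    have h3 : a * (m - k) ≤ a * (m - i - 1) := Nat.mul_le_mul le_rfl (by omega)
    have h4 : ck * b < ci * b := by omega
    exact Nat.lt_of_mul_lt_mul_right h4
  rcases Nat.lt_trichotomy (a * (k - i)) ((ci - ck) * b) with hlt | heq | hgt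
  · exfalso
    obtain ⟨D, hD1, hD2⟩ := exists_dyck a b i k m ci ck ha hab hik hkm2 hmb
      hcia hck1 hcki h1l h1r h2l h2r hlt
    apply he.2.2
    refine ⟨D, ?_⟩
    intro d hd
    simp only [Finset.mem_insert, Finset.mem_singleton] at hd
    rcases hd with rfl | rfl
    · exact hD1
    · exact hD2
  · exfalso
    have hdvd : b ∣ a * (k - i) := ⟨ci - ck, by rw [heq, Nat.mul_comm]⟩
    have hdvd2 : b ∣ k - i := hcop.symm.dvd_of_dvd_mul_left hdvd
    have hle := Nat.le_of_dvd (by omega) hdvd2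
    omega
  · have he1 : 1 ≤ ci - ck := by omega
    have hel : a * (k - i - 1) + 1 ≤ (ci - ck) * b := by
      have heq1 : (ci - ck) * b + ck * b = ci * b := by rw [← Nat.add_mul]; congr 1; omega
      have heq2 : a * (m - i - 1) = a * (m - k) + a * (k - i - 1) := by
        rw [← Nat.mul_add]; congr 1; omega
      omega
    have hea : ci - ck < a := by
      have h5 : (ci - ck) * b < a * b := by
        calc (ci - ck) * b < a * (k - i) := hgt
          _ ≤ a * b := Nat.mul_le_mul le_rfl (by omega)
      exact Nat.lt_of_mul_lt_mul_right h5
    have hki2 : i + 2 ≤ k := by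
      by_contra hcon
      have hki1 : k - i = 1 := by omega
      rw [hki1, Nat.mul_one] at hgt
      have h6 : b ≤ (ci - ck) * b := Nat.le_mul_of_pos_left b (by omega)
      omega
    refine ⟨⟨hki2, by omega, by omega⟩, ?_, ?_⟩
    · show k - i - 1 ∈ Sab a b
      simp only [Sab, Finset.mem_image, Finset.mem_Icc]
      refine ⟨ci - ck, ⟨he1, by omega⟩, ?_⟩
      have lo : (k - i - 1) * a ≤ (ci - ck) * b := by
        rw [Nat.mul_comm (k - i - 1) a]; omega
      have hi : (ci - ck) * b < (k - i - 1 + 1) * a := by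
        rw [show k - i - 1 + 1 = k - i from by omega, Nat.mul_comm (k - i) a]; exact hgt
      exact Nat.div_eq_of_lt_le lo hi
    · show b - k + i ∈ Sab a b
      simp only [Sab, Finset.mem_image, Finset.mem_Icc]
      refine ⟨a - (ci - ck), ⟨by omega, by omega⟩, ?_⟩
      have key : (a - (ci - ck)) * b + (ci - ck) * b = a * b := by
        rw [← Nat.add_mul]; congr 1; omega
      have hsplit : a * b = a * (b - (k - i)) + a * (k - i) := by
        rw [← Nat.mul_add]; congr 1; omega
      have e5 : a * (k - i) = a * (k - i - 1) + a := by
        rw [← Nat.mul_succ]; congr 1; omega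
      have hbk : b - k + i = b - (k - i) := by omega
      rw [hbk]
      apply Nat.div_eq_of_lt_le
      · rw [Nat.mul_comm (b - (k - i)) a]; omega
      · have expand : (b - (k - i) + 1) * a = a * (b - (k - i)) + a := by ring
        rw [expand]; omega
end
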